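/- Let m > n be positive integers and a, b ∈ ℝ. With ψ(x,y) = -cos(mx)cos(ny) and f(x,y) = cos(x)·(1 + a·cos(2mx) + b·cos(2ny)), the function φ = {ψ, f} satisfies the exact identity ∫₀^{2π}∫₀^{2π} ((∂ₓφ)² + (∂_yφ)² − (m²+n²)φ²) dx dy = (π²n²/4)·H(a,b,m,n), where H(a,b,m,n) = 16a²m⁴ + 16b²m²n² + 24a²m² − 12abm² + 4b²m² + 4b²n² + 8am² − 8bm² + a² − ab + b² + 2a − 2b + 2. -/

import Mathlib

open Real MeasureTheory

/-- Partial derivative in the first variable of a curried function `ℝ → ℝ → ℝ`. -/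
noncomputable def pdx (φ : ℝ → ℝ → ℝ) (x y : ℝ) : ℝ := deriv (fun t => φ t y) x

/-- Partial derivative in the second variable of a curried function `ℝ → ℝ → ℝ`. -/
noncomputable def pdy (φ : ℝ → ℝ → ℝ) (x y : ℝ) : ℝ := deriv (fun t => φ x t) y

/-- Poisson bracket `{ψ, f} = ∂ₓψ ∂_y f − ∂_y ψ ∂ₓ f`. -/
noncomputable def pb (ψ f : ℝ → ℝ → ℝ) : ℝ → ℝ → ℝ :=
  fun x y => pdx ψ x y * pdy f x y - pdy ψ x y * pdx f x y

/-- Misiołek index with coefficient `lam2` (usually `m² + n²`):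
`∫₀^{2π}∫₀^{2π} ((∂ₓφ)² + (∂_yφ)² − lam2·φ²) dx dy`. -/
noncomputable def MI (lam2 : ℝ) (φ : ℝ → ℝ → ℝ) : ℝ :=
  ∫ y in (0:ℝ)..(2 * π), ∫ x in (0:ℝ)..(2 * π),
    ((pdx φ x y) ^ 2 + (pdy φ x y) ^ 2 - lam2 * (φ x y) ^ 2)

/-- The quadratic polynomial `H(a,b,m,n)` from the off-diagonal case. -/
def Hoff (a b m n : ℝ) : ℝ :=
  16 * a ^ 2 * m ^ 4 + 16 * b ^ 2 * m ^ 2 * n ^ 2 + 24 * a ^ 2 * m ^ 2 -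
    12 * a * b * m ^ 2 + 4 * b ^ 2 * m ^ 2 + 4 * b ^ 2 * n ^ 2 + 8 * a * m ^ 2 -
    8 * b * m ^ 2 + a ^ 2 - a * b + b ^ 2 + 2 * a - 2 * b + 2

/- ### Auxiliary lemmas -/

lemma intCos (j : ℤ) (hj : j ≠ 0) : ∫ x in (0:ℝ)..(2*π), Real.cos (j * x) = 0 := by
  have hj' : (j:ℝ) ≠ 0 := Int.cast_ne_zero.mpr hj
  rw [intervalIntegral.integral_comp_mul_left (fun x => Real.cos x) hj']
  simp only [mul_zero, integral_cos, Real.sin_zero, sub_zero, smul_eq_mul]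
  have : (j:ℝ) * (2*π) = ((2*j : ℤ) : ℝ) * π := by push_cast; ring
  rw [this, Real.sin_int_mul_pi, mul_zero]

lemma intCos0 : ∫ x in (0:ℝ)..(2*π), Real.cos ((0:ℤ) * x) = 2 * π := by
  simp

lemma Iss (k l : ℤ) (hk : 0 < k) (hl : 0 < l) :
    ∫ x in (0:ℝ)..(2*π), Real.sin (k * x) * Real.sin (l * x) =
      if k = l then π else 0 := by
  have hpt : ∀ x : ℝ, Real.sin (k * x) * Real.sin (l * x)
      = (1/2) * Real.cos (((k - l : ℤ)) * x) - (1/2) * Real.cos (((k + l : ℤ)) * x) := by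
    intro x
    have h1 : ((k - l : ℤ) : ℝ) * x = (k:ℝ)*x - (l:ℝ)*x := by push_cast; ring
    have h2 : ((k + l : ℤ) : ℝ) * x = (k:ℝ)*x + (l:ℝ)*x := by push_cast; ring
    rw [h1, h2, Real.cos_sub, Real.cos_add]; ring
  rw [intervalIntegral.integral_congr (fun x _ => hpt x),
    intervalIntegral.integral_sub, intervalIntegral.integral_const_mul,
    intervalIntegral.integral_const_mul]
  · have hkl : k + l ≠ 0 := by omega
    rw [intCos _ hkl]
    by_cases h : k = l
    · subst h; rw [sub_self]; simp
    · rw [if_neg h, intCos _ (by omega)]; ring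
  · exact (Continuous.intervalIntegrable (by fun_prop) _ _)
  · exact (Continuous.intervalIntegrable (by fun_prop) _ _)

lemma Icc' (k l : ℤ) (hk : 0 < k) (hl : 0 < l) :
    ∫ x in (0:ℝ)..(2*π), Real.cos (k * x) * Real.cos (l * x) =
      if k = l then π else 0 := by
  have hpt : ∀ x : ℝ, Real.cos (k * x) * Real.cos (l * x)
      = (1/2) * Real.cos (((k - l : ℤ)) * x) + (1/2) * Real.cos (((k + l : ℤ)) * x) := by
    intro x
    have h1 : ((k - l : ℤ) : ℝ) * x = (k:ℝ)*x - (l:ℝ)*x := by push_cast; ring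
    have h2 : ((k + l : ℤ) : ℝ) * x = (k:ℝ)*x + (l:ℝ)*x := by push_cast; ring
    rw [h1, h2, Real.cos_sub, Real.cos_add]; ring
  rw [intervalIntegral.integral_congr (fun x _ => hpt x),
    intervalIntegral.integral_add, intervalIntegral.integral_const_mul,
    intervalIntegral.integral_const_mul]
  · have hkl : k + l ≠ 0 := by omega
    rw [intCos _ hkl]
    by_cases h : k = l
    · subst h; rw [sub_self]; simp [intCos0]
    · rw [if_neg h, intCos _ (by omega)]; ring
  · exact (Continuous.intervalIntegrable (by fun_prop) _ _)
  · exact (Continuous.intervalIntegrable (by fun_prop) _ _)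

lemma orth_sin {N : ℕ} (k : Fin N → ℤ) (hk : ∀ i, 0 < k i)
    (hinj : Function.Injective k) (A B : Fin N → ℝ) :
    ∫ x in (0:ℝ)..(2*π),
      (∑ i, A i * Real.sin (k i * x)) * (∑ j, B j * Real.sin (k j * x)) =
      π * ∑ i, A i * B i := by
  have hpt : ∀ x : ℝ, (∑ i, A i * Real.sin (k i * x)) * (∑ j, B j * Real.sin (k j * x))
      = ∑ i, ∑ j, (A i * B j) * (Real.sin (k i * x) * Real.sin (k j * x)) := by
    intro x
    rw [Finset.sum_mul_sum]
    exact Finset.sum_congr rfl fun i _ => Finset.sum_congr rfl fun j _ => by ring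
  rw [intervalIntegral.integral_congr (fun x _ => hpt x)]
  rw [intervalIntegral.integral_finset_sum (fun i _ =>
      (Continuous.intervalIntegrable (by fun_prop) _ _))]
  have : ∀ i : Fin N, ∫ x in (0:ℝ)..(2*π),
      ∑ j, (A i * B j) * (Real.sin (k i * x) * Real.sin (k j * x)) = A i * B i * π := by
    intro i
    rw [intervalIntegral.integral_finset_sum (fun j _ =>
        (Continuous.intervalIntegrable (by fun_prop) _ _))]
    have : ∀ j : Fin N, ∫ x in (0:ℝ)..(2*π),
        (A i * B j) * (Real.sin (k i * x) * Real.sin (k j * x))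
        = A i * B j * (if i = j then π else 0) := by
      intro j
      rw [intervalIntegral.integral_const_mul, Iss _ _ (hk i) (hk j)]
      congr 1
      simp [hinj.eq_iff]
    simp only [this]
    simp [Finset.sum_ite_eq, mul_comm]
  simp only [this]
  rw [Finset.mul_sum]
  exact Finset.sum_congr rfl fun i _ => by ring

lemma orth_cos {N : ℕ} (k : Fin N → ℤ) (hk : ∀ i, 0 < k i)
    (hinj : Function.Injective k) (A B : Fin N → ℝ) :
    ∫ x in (0:ℝ)..(2*π),
      (∑ i, A i * Real.cos (k i * x)) * (∑ j, B j * Real.cos (k j * x)) =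
      π * ∑ i, A i * B i := by
  have hpt : ∀ x : ℝ, (∑ i, A i * Real.cos (k i * x)) * (∑ j, B j * Real.cos (k j * x))
      = ∑ i, ∑ j, (A i * B j) * (Real.cos (k i * x) * Real.cos (k j * x)) := by
    intro x
    rw [Finset.sum_mul_sum]
    exact Finset.sum_congr rfl fun i _ => Finset.sum_congr rfl fun j _ => by ring
  rw [intervalIntegral.integral_congr (fun x _ => hpt x)]
  rw [intervalIntegral.integral_finset_sum (fun i _ =>
      (Continuous.intervalIntegrable (by fun_prop) _ _))]
  have : ∀ i : Fin N, ∫ x in (0:ℝ)..(2*π),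
      ∑ j, (A i * B j) * (Real.cos (k i * x) * Real.cos (k j * x)) = A i * B i * π := by
    intro i
    rw [intervalIntegral.integral_finset_sum (fun j _ =>
        (Continuous.intervalIntegrable (by fun_prop) _ _))]
    have : ∀ j : Fin N, ∫ x in (0:ℝ)..(2*π),
        (A i * B j) * (Real.cos (k i * x) * Real.cos (k j * x))
        = A i * B j * (if i = j then π else 0) := by
      intro j
      rw [intervalIntegral.integral_const_mul, Icc' _ _ (hk i) (hk j)]
      congr 1
      simp [hinj.eq_iff]
    simp only [this]
    simp [Finset.sum_ite_eq, mul_comm]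
  simp only [this]
  rw [Finset.mul_sum]
  exact Finset.sum_congr rfl fun i _ => by ring

lemma inner_eval {N : ℕ} (k : Fin N → ℤ) (hk : ∀ i, 0 < k i)
    (hinj : Function.Injective k) (lam : ℝ) (A B C : Fin N → ℝ) :
    ∫ x in (0:ℝ)..(2*π),
      ((∑ i, A i * Real.cos (k i * x)) ^ 2 + (∑ i, B i * Real.sin (k i * x)) ^ 2
        - lam * (∑ i, C i * Real.sin (k i * x)) ^ 2) =
      π * ∑ i, ((A i) ^ 2 + (B i) ^ 2 - lam * (C i) ^ 2) := by
  have hsq : ∀ u : ℝ, u ^ 2 = u * u := fun u => sq u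
  simp only [hsq]
  rw [intervalIntegral.integral_sub, intervalIntegral.integral_add,
    intervalIntegral.integral_const_mul, orth_cos k hk hinj, orth_sin k hk hinj,
    orth_sin k hk hinj]
  · simp only [Finset.mul_sum, ← Finset.sum_add_distrib, ← Finset.sum_sub_distrib]
    exact Finset.sum_congr rfl fun i _ => by ring
  · exact (Continuous.intervalIntegrable (by fun_prop) _ _)
  · exact (Continuous.intervalIntegrable (by fun_prop) _ _)
  · exact (Continuous.intervalIntegrable (by fun_prop) _ _)
  · exact (Continuous.intervalIntegrable (by fun_prop) _ _)

lemma hd_sin (c x : ℝ) : HasDerivAt (fun t => Real.sin (c*t)) (c * Real.cos (c*x)) x := by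
  simpa [mul_comm, Function.comp_def] using (Real.hasDerivAt_sin (c*x)).comp x ((hasDerivAt_id x).const_mul c)

lemma hd_cos (c x : ℝ) : HasDerivAt (fun t => Real.cos (c*t)) (-(c * Real.sin (c*x))) x := by
  simpa [mul_comm, Function.comp_def] using (Real.hasDerivAt_cos (c*x)).comp x ((hasDerivAt_id x).const_mul c)

/-- Exact evaluation of the Misiołek index of the two-parameter family of
variations in the off-diagonal case. -/
theorem misiolek_index_offdiagonal_formula (m n : ℕ) (hn : 0 < n) (hmn : n < m)
    (a b : ℝ) :
    let ψ : ℝ → ℝ → ℝ := fun x y => -(Real.cos (m * x) * Real.cos (n * y))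
    let f : ℝ → ℝ → ℝ := fun x y =>
      Real.cos x * (1 + a * Real.cos (2 * m * x) + b * Real.cos (2 * n * y))
    MI ((m : ℝ) ^ 2 + (n : ℝ) ^ 2) (pb ψ f) =
      (π ^ 2 * (n : ℝ) ^ 2 / 4) * Hoff a b (m : ℝ) (n : ℝ) := by
  intro ψ f
  have hm2 : 2 ≤ m := by omega
  set lam : ℝ := (m : ℝ) ^ 2 + (n : ℝ) ^ 2 with hlam
  -- the frequency vectors and coefficient matrix
  set k : Fin 4 → ℤ := ![(m:ℤ)-1, (m:ℤ)+1, 3*(m:ℤ)-1, 3*(m:ℤ)+1] with hkdef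
  set l : Fin 2 → ℤ := ![(n:ℤ), 3*(n:ℤ)] with hldef
  set c : Fin 4 → Fin 2 → ℝ :=
    ![![(n:ℝ)/4*(-2 - a + 2*a*m + b - 2*b*m), -(n:ℝ)/4*b*(2*m+1)],
      ![(n:ℝ)/4*(2 + a + 2*a*m - b - 2*b*m), (n:ℝ)/4*b*(1-2*m)],
      ![(n:ℝ)/4*a*(2*m-1), 0],
      ![(n:ℝ)/4*a*(2*m+1), 0]] with hcdef
  have hk : ∀ i, 0 < k i := by
    intro i; fin_cases i <;> simp [hkdef] <;> omega
  have hkinj : Function.Injective k := by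
    intro i j h
    rw [hkdef] at h
    fin_cases i <;> fin_cases j <;> simp at h ⊢ <;> omega
  have hl : ∀ j, 0 < l j := by
    intro j; fin_cases j <;> simp [hldef] <;> omega
  have hlinj : Function.Injective l := by
    intro i j h
    rw [hldef] at h
    fin_cases i <;> fin_cases j <;> simp at h ⊢ <;> omega
  -- the Fourier form of the Poisson bracket
  set G : ℝ → ℝ → ℝ :=
    fun x y => ∑ i, (∑ j, c i j * Real.sin ((l j : ℝ) * y)) * Real.sin ((k i : ℝ) * x)
    with hGdef
  have hpb : pb ψ f = G := by
    funext x y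
    have hψx : pdx ψ x y = (m:ℝ) * Real.sin (m*x) * Real.cos (n*y) := by
      have h : HasDerivAt (fun t : ℝ => -(Real.cos ((m:ℝ)*t) * Real.cos ((n:ℝ)*y)))
          ((m:ℝ) * Real.sin ((m:ℝ)*x) * Real.cos ((n:ℝ)*y)) x := by
        have h0 := (((hd_cos (m:ℝ) x)).mul_const (Real.cos ((n:ℝ)*y))).neg
        exact h0.congr_deriv (by ring)
      exact h.deriv
    have hψy : pdy ψ x y = (n:ℝ) * Real.cos (m*x) * Real.sin (n*y) := by
      have h : HasDerivAt (fun t : ℝ => -(Real.cos ((m:ℝ)*x) * Real.cos ((n:ℝ)*t)))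
          ((n:ℝ) * Real.cos ((m:ℝ)*x) * Real.sin ((n:ℝ)*y)) y := by
        have h0 := (((hd_cos (n:ℝ) y)).const_mul (Real.cos ((m:ℝ)*x))).neg
        exact h0.congr_deriv (by ring)
      exact h.deriv
    have hfx : pdx f x y = -(Real.sin x * (1 + a * Real.cos (2*(m:ℝ)*x)
        + b * Real.cos (2*(n:ℝ)*y))) - 2*a*(m:ℝ)*Real.cos x * Real.sin (2*(m:ℝ)*x) := by
      have h : HasDerivAt (fun t : ℝ => Real.cos t *
          (1 + a * Real.cos (2*(m:ℝ)*t) + b * Real.cos (2*(n:ℝ)*y)))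
          (-(Real.sin x * (1 + a * Real.cos (2*(m:ℝ)*x) + b * Real.cos (2*(n:ℝ)*y)))
            - 2*a*(m:ℝ)*Real.cos x * Real.sin (2*(m:ℝ)*x)) x := by
        have h0 := (Real.hasDerivAt_cos x).mul
          ((((hd_cos (2*(m:ℝ)) x).const_mul a).const_add 1).add_const
            (b * Real.cos (2*(n:ℝ)*y)))
        exact h0.congr_deriv (by ring)
      exact h.deriv
    have hfy : pdy f x y = Real.cos x * (-(2*b*(n:ℝ)*Real.sin (2*(n:ℝ)*y))) := by
      have h : HasDerivAt (fun t : ℝ => Real.cos x *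
          (1 + a * Real.cos (2*(m:ℝ)*x) + b * Real.cos (2*(n:ℝ)*t)))
          (Real.cos x * (-(2*b*(n:ℝ)*Real.sin (2*(n:ℝ)*y)))) y := by
        have h0 := ((((hd_cos (2*(n:ℝ)) y).const_mul b).const_add
            (1 + a * Real.cos (2*(m:ℝ)*x))).const_mul (Real.cos x))
        exact h0.congr_deriv (by ring)
      exact h.deriv
    show pdx ψ x y * pdy f x y - pdy ψ x y * pdx f x y = G x y
    rw [hψx, hψy, hfx, hfy, hGdef]
    simp only [Fin.sum_univ_four, Fin.sum_univ_two, hkdef, hldef, hcdef,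
      Matrix.cons_val_zero, Matrix.cons_val_one, Matrix.head_cons,
      Matrix.cons_val_two, Matrix.tail_cons, Matrix.cons_val_three]
    push_cast
    simp only [show ((m:ℝ)-1)*x = m*x - x from by ring,
      show ((m:ℝ)+1)*x = m*x + x from by ring,
      show (3*(m:ℝ)-1)*x = (m*x + m*x + m*x) - x from by ring,
      show (3*(m:ℝ)+1)*x = (m*x + m*x + m*x) + x from by ring,
      show 2*(m:ℝ)*x = m*x + m*x from by ring,
      show 3*(n:ℝ)*y = n*y + n*y + n*y from by ring,
      show 2*(n:ℝ)*y = n*y + n*y from by ring,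
      Real.sin_add, Real.cos_add, Real.sin_sub, Real.cos_sub]
    linear_combination
      ((1/2:ℝ) * (n:ℝ) * a * Real.cos ((m:ℝ)*x) * Real.sin x * Real.sin ((n:ℝ)*y)
        + (m:ℝ) * (n:ℝ) * a * Real.sin ((m:ℝ)*x) * Real.cos x * Real.sin ((n:ℝ)*y))
        * (Real.sin_sq_add_cos_sq ((m:ℝ)*x))
      + ((-1/2:ℝ) * (n:ℝ) * b * Real.cos ((m:ℝ)*x) * Real.sin x * Real.sin ((n:ℝ)*y)
        + (-1:ℝ) * (m:ℝ) * (n:ℝ) * b * Real.sin ((m:ℝ)*x) * Real.cos x * Real.sin ((n:ℝ)*y))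
        * (Real.sin_sq_add_cos_sq ((n:ℝ)*y))
  rw [hpb]
  -- derivatives of the Fourier form
  have hgx : ∀ x y : ℝ, pdx G x y
      = ∑ i, ((k i : ℝ) * ∑ j, c i j * Real.sin ((l j : ℝ) * y)) * Real.cos ((k i : ℝ) * x) := by
    intro x y
    have h : HasDerivAt (fun t : ℝ => ∑ i, (∑ j, c i j * Real.sin ((l j : ℝ) * y))
        * Real.sin ((k i : ℝ) * t))
        (∑ i, (∑ j, c i j * Real.sin ((l j : ℝ) * y)) * ((k i : ℝ) * Real.cos ((k i : ℝ) * x)))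
        x :=
      HasDerivAt.fun_sum fun i _ => (hd_sin ((k i : ℝ)) x).const_mul _
    rw [show pdx G x y = deriv (fun t => G t y) x from rfl, h.deriv]
    exact Finset.sum_congr rfl fun i _ => by ring
  have hgy : ∀ x y : ℝ, pdy G x y
      = ∑ i, (∑ j, c i j * ((l j : ℝ) * Real.cos ((l j : ℝ) * y))) * Real.sin ((k i : ℝ) * x) := by
    intro x y
    have h : HasDerivAt (fun t : ℝ => ∑ i, (∑ j, c i j * Real.sin ((l j : ℝ) * t))
        * Real.sin ((k i : ℝ) * x))
        (∑ i, (∑ j, c i j * ((l j : ℝ) * Real.cos ((l j : ℝ) * y))) * Real.sin ((k i : ℝ) * x))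
        y :=
      HasDerivAt.fun_sum fun i _ =>
        (HasDerivAt.fun_sum fun j _ => (hd_sin ((l j : ℝ)) y).const_mul _).mul_const _
    rw [show pdy G x y = deriv (fun t => G x t) y from rfl, h.deriv]
  -- evaluate the inner integral
  have hin : ∀ y : ℝ, (∫ x in (0:ℝ)..(2*π),
      ((pdx G x y) ^ 2 + (pdy G x y) ^ 2 - lam * (G x y) ^ 2))
      = π * ∑ i, (((k i : ℝ) * ∑ j, c i j * Real.sin ((l j : ℝ) * y)) ^ 2
        + (∑ j, c i j * ((l j : ℝ) * Real.cos ((l j : ℝ) * y))) ^ 2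
        - lam * (∑ j, c i j * Real.sin ((l j : ℝ) * y)) ^ 2) := by
    intro y
    have hpt : ∀ x : ℝ, (pdx G x y) ^ 2 + (pdy G x y) ^ 2 - lam * (G x y) ^ 2
        = ((∑ i, ((k i : ℝ) * ∑ j, c i j * Real.sin ((l j : ℝ) * y)) * Real.cos ((k i : ℝ) * x)) ^ 2
          + (∑ i, (∑ j, c i j * ((l j : ℝ) * Real.cos ((l j : ℝ) * y))) * Real.sin ((k i : ℝ) * x)) ^ 2
          - lam * (∑ i, (∑ j, c i j * Real.sin ((l j : ℝ) * y)) * Real.sin ((k i : ℝ) * x)) ^ 2) := by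
      intro x
      rw [hgx, hgy]
    rw [intervalIntegral.integral_congr (fun x _ => hpt x)]
    exact inner_eval k hk hkinj lam _ _ _
  unfold MI
  rw [intervalIntegral.integral_congr (fun y _ => hin y)]
  rw [intervalIntegral.integral_const_mul]
  rw [intervalIntegral.integral_finset_sum (fun i _ =>
      (Continuous.intervalIntegrable (by fun_prop) _ _))]
  -- evaluate each outer integral
  have hout : ∀ i : Fin 4, (∫ y in (0:ℝ)..(2*π),
      (((k i : ℝ) * ∑ j, c i j * Real.sin ((l j : ℝ) * y)) ^ 2
        + (∑ j, c i j * ((l j : ℝ) * Real.cos ((l j : ℝ) * y))) ^ 2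
        - lam * (∑ j, c i j * Real.sin ((l j : ℝ) * y)) ^ 2))
      = π * ∑ j, ((c i j * (l j : ℝ)) ^ 2 + ((k i : ℝ) * c i j) ^ 2 - lam * (c i j) ^ 2) := by
    intro i
    have hpt : ∀ y : ℝ,
        (((k i : ℝ) * ∑ j, c i j * Real.sin ((l j : ℝ) * y)) ^ 2
          + (∑ j, c i j * ((l j : ℝ) * Real.cos ((l j : ℝ) * y))) ^ 2
          - lam * (∑ j, c i j * Real.sin ((l j : ℝ) * y)) ^ 2)
        = ((∑ j, (c i j * (l j : ℝ)) * Real.cos ((l j : ℝ) * y)) ^ 2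
          + (∑ j, ((k i : ℝ) * c i j) * Real.sin ((l j : ℝ) * y)) ^ 2
          - lam * (∑ j, (c i j) * Real.sin ((l j : ℝ) * y)) ^ 2) := by
      intro y
      have e1 : (k i : ℝ) * ∑ j, c i j * Real.sin ((l j : ℝ) * y)
          = ∑ j, ((k i : ℝ) * c i j) * Real.sin ((l j : ℝ) * y) := by
        rw [Finset.mul_sum]; exact Finset.sum_congr rfl fun j _ => by ring
      have e2 : (∑ j, c i j * ((l j : ℝ) * Real.cos ((l j : ℝ) * y)))
          = ∑ j, (c i j * (l j : ℝ)) * Real.cos ((l j : ℝ) * y) :=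
        Finset.sum_congr rfl fun j _ => by ring
      rw [e1, e2]; ring
    rw [intervalIntegral.integral_congr (fun y _ => hpt y)]
    exact inner_eval l hl hlinj lam _ _ _
  simp only [hout]
  -- final scalar computation
  simp only [hkdef, hldef, hcdef, Fin.sum_univ_four, Fin.sum_univ_two,
    Matrix.cons_val_zero, Matrix.cons_val_one, Matrix.head_cons,
    Matrix.cons_val_two, Matrix.tail_cons, Matrix.cons_val_three, hlam, Hoff]
  push_cast
  ring
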